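/- Let w = (w_0, …, w_n) be a tuple of positive integers, P = k[x_0,…,x_n] the polynomial ring graded by deg(x_i) = w_i over a commutative ring k, and p a homogeneous prime ideal of P not containing the irrelevant ideal (x_0,…,x_n). Then the graded localization P_p is standard (contains a unit of degree 1) if and only if gcd{w_i : x_i ∉ p} = 1. Consequently, P_p is standard for all such p if and only if w_0 = ⋯ = w_n = 1. -/

import Mathlib

/-- The degree-`d` part of the graded localization `S⁻¹A`: fractions `a/s` with `a` and `s`
homogeneous and `deg a - deg s = d`. -/
def LocGrade {A σ : Type*} [CommRing A] [SetLike σ A] (𝒜 : ℤ → σ) (S : Submonoid A)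
    (d : ℤ) : Set (Localization S) :=
  {x | ∃ (a : A) (s : S) (i : ℤ), a ∈ 𝒜 (d + i) ∧ (s : A) ∈ 𝒜 i ∧ x = Localization.mk a s}

/-- An ideal of the graded localization is homogeneous if it is generated by its
homogeneous elements. -/
def LocIsHomogeneous {A σ : Type*} [CommRing A] [SetLike σ A] (𝒜 : ℤ → σ) (S : Submonoid A)
    (Q : Ideal (Localization S)) : Prop :=
  Q = Ideal.span {x | (∃ d : ℤ, x ∈ LocGrade 𝒜 S d) ∧ x ∈ Q}

/-- The graded localization `S⁻¹A` is good: homogeneous primes are determined by their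
degree-zero parts. -/
def LocGood {A σ : Type*} [CommRing A] [SetLike σ A] (𝒜 : ℤ → σ) (S : Submonoid A) : Prop :=
  ∀ Q Q' : Ideal (Localization S), Q.IsPrime → Q'.IsPrime →
    LocIsHomogeneous 𝒜 S Q → LocIsHomogeneous 𝒜 S Q' →
    (∀ x ∈ LocGrade 𝒜 S 0, (x ∈ Q ↔ x ∈ Q')) → Q = Q'

/-- The graded localization `S⁻¹A` is quasi-standard: it contains an invertible
homogeneous element of positive degree. -/
def LocQuasiStandard {A σ : Type*} [CommRing A] [SetLike σ A] (𝒜 : ℤ → σ)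
    (S : Submonoid A) : Prop :=
  ∃ d : ℤ, 0 < d ∧ ∃ x ∈ LocGrade 𝒜 S d, IsUnit x

/-- The graded localization `S⁻¹A` is standard: it contains an invertible element of
degree `1`. -/
def LocStandard {A σ : Type*} [CommRing A] [SetLike σ A] (𝒜 : ℤ → σ)
    (S : Submonoid A) : Prop :=
  ∃ x ∈ LocGrade 𝒜 S 1, IsUnit x

/-- The graded localization `S⁻¹A` is quasi-trivial: every homogeneous element of nonzero
degree is nilpotent. -/
def LocQuasiTrivial {A σ : Type*} [CommRing A] [SetLike σ A] (𝒜 : ℤ → σ)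
    (S : Submonoid A) : Prop :=
  ∀ d : ℤ, d ≠ 0 → ∀ x ∈ LocGrade 𝒜 S d, IsNilpotent x

/-- The graded localization `S⁻¹A` is trivial: every homogeneous element of nonzero
degree is zero. -/
def LocTrivial {A σ : Type*} [CommRing A] [SetLike σ A] (𝒜 : ℤ → σ)
    (S : Submonoid A) : Prop :=
  ∀ d : ℤ, d ≠ 0 → ∀ x ∈ LocGrade 𝒜 S d, x = 0

noncomputable instance stmt17_gradedInstance {k : Type*} [CommRing k] {n : ℕ}
    (w : Fin (n + 1) → ℤ) :
    GradedAlgebra (MvPolynomial.weightedHomogeneousSubmodule k w) :=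
  MvPolynomial.weightedGradedAlgebra k w


open MvPolynomial in
private lemma stmt17_deg_mem {k : Type*} [CommRing k] {n : ℕ} (w : Fin (n + 1) → ℤ)
    (p : Ideal (MvPolynomial (Fin (n + 1)) k))
    {b : MvPolynomial (Fin (n + 1)) k} {d : ℤ}
    (hb : b ∉ p) (hbd : b.IsWeightedHomogeneous w d) :
    d ∈ Ideal.span {m : ℤ | ∃ i, MvPolynomial.X i ∉ p ∧ m = w i} := by
  by_cases H : ∃ m ∈ b.support, ∀ j ∈ m.support, MvPolynomial.X j ∉ p
  · obtain ⟨m, hm, hgood⟩ := H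
    have hd : Finsupp.weight w m = d := hbd (mem_support_iff.mp hm)
    rw [← hd, Finsupp.weight_apply, Finsupp.sum]
    refine Ideal.sum_mem _ fun j hj => ?_
    rw [nsmul_eq_mul]
    exact Ideal.mul_mem_left _ _ (Ideal.subset_span ⟨j, hgood j hj, rfl⟩)
  · push_neg at H
    refine absurd ?_ hb
    rw [b.as_sum]
    refine Ideal.sum_mem _ fun m hm => ?_
    obtain ⟨j, hj, hjp⟩ := H m hm
    have hmj : m j ≠ 0 := Finsupp.mem_support_iff.mp hj
    have hfe : Finsupp.single j 1 + (m - Finsupp.single j 1) = m := by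
      ext j'
      rcases eq_or_ne j' j with rfl | h
      · simp [Finsupp.single_apply]
        omega
      · simp [Finsupp.single_apply, Ne.symm h]
    have hsplit : (monomial m) (coeff m b) =
        MvPolynomial.X j * (monomial (m - Finsupp.single j 1)) (coeff m b) := by
      rw [MvPolynomial.X, monomial_mul, one_mul, hfe]
    rw [hsplit]
    exact Ideal.mul_mem_right _ _ hjp


open MvPolynomial in
private lemma stmt17_achieve {k : Type*} [CommRing k] {n : ℕ} (w : Fin (n + 1) → ℤ)
    (p : Ideal (MvPolynomial (Fin (n + 1)) k)) (hp : p.IsPrime) {d : ℤ}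
    (hd : d ∈ Ideal.span {m : ℤ | ∃ i, MvPolynomial.X i ∉ p ∧ m = w i}) :
    ∃ a s : MvPolynomial (Fin (n + 1)) k, a ∉ p ∧ s ∉ p ∧ ∃ e : ℤ,
      a.IsWeightedHomogeneous w (d + e) ∧ s.IsWeightedHomogeneous w e := by
  have h1 : (1 : MvPolynomial (Fin (n + 1)) k) ∉ p := (Ideal.ne_top_iff_one p).mp hp.ne_top
  induction hd using Submodule.span_induction with
  | mem m hm =>
    obtain ⟨i, hXi, rfl⟩ := hm
    exact ⟨X i, 1, hXi, h1, 0, by simpa using isWeightedHomogeneous_X k w i,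
      isWeightedHomogeneous_one k w⟩
  | zero =>
    exact ⟨1, 1, h1, h1, 0, by simpa using isWeightedHomogeneous_one k w,
      isWeightedHomogeneous_one k w⟩
  | add x y hx hy ihx ihy =>
    obtain ⟨a1, s1, ha1, hs1, e1, hae1, hse1⟩ := ihx
    obtain ⟨a2, s2, ha2, hs2, e2, hae2, hse2⟩ := ihy
    refine ⟨a1 * a2, s1 * s2, fun h => ((hp.mem_or_mem h).elim ha1 ha2),
      fun h => ((hp.mem_or_mem h).elim hs1 hs2), e1 + e2, ?_, hse1.mul hse2⟩
    have heq : x + y + (e1 + e2) = (x + e1) + (y + e2) := by ring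
    rw [heq]
    exact hae1.mul hae2
  | smul c x hx ih =>
    obtain ⟨a, s, ha, hs, e, hae, hse⟩ := ih
    have hgen : ∀ t : ℕ, ∃ A S : MvPolynomial (Fin (n + 1)) k, A ∉ p ∧ S ∉ p ∧
        A.IsWeightedHomogeneous w ((t : ℤ) * x + (t : ℤ) * e) ∧
        S.IsWeightedHomogeneous w ((t : ℤ) * e) := by
      intro t
      refine ⟨a ^ t, s ^ t, fun h => ha (hp.mem_of_pow_mem _ h),
        fun h => hs (hp.mem_of_pow_mem _ h), ?_, ?_⟩
      · have h2 := SetLike.pow_mem_graded t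
          ((mem_weightedHomogeneousSubmodule k w _ a).mpr hae)
        rw [mem_weightedHomogeneousSubmodule] at h2
        have heq : (t : ℤ) * x + (t : ℤ) * e = t • (x + e) := by
          rw [nsmul_eq_mul]; ring
        rw [heq]; exact h2
      · have h2 := SetLike.pow_mem_graded t
          ((mem_weightedHomogeneousSubmodule k w _ s).mpr hse)
        rw [mem_weightedHomogeneousSubmodule] at h2
        have heq : (t : ℤ) * e = t • e := by rw [nsmul_eq_mul]
        rw [heq]; exact h2
    rcases le_or_gt 0 c with hc | hc
    · obtain ⟨A, S, hA, hS, hAE, hSE⟩ := hgen c.toNat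
      rw [Int.toNat_of_nonneg hc] at hAE hSE
      refine ⟨A, S, hA, hS, c * e, ?_, hSE⟩
      rwa [smul_eq_mul]
    · obtain ⟨A, S, hA, hS, hAE, hSE⟩ := hgen (-c).toNat
      rw [Int.toNat_of_nonneg (by omega)] at hAE hSE
      refine ⟨S, A, hS, hA, -c * x + -c * e, ?_, hAE⟩
      have heq : c • x + (-c * x + -c * e) = -c * e := by rw [smul_eq_mul]; ring
      rw [heq]; exact hSE

open MvPolynomial in
private lemma stmt17_part1 {k : Type*} [CommRing k] {n : ℕ} (w : Fin (n + 1) → ℤ)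
    (p : Ideal (MvPolynomial (Fin (n + 1)) k)) (hp : p.IsPrime)
    (T : Submonoid (MvPolynomial (Fin (n + 1)) k))
    (hT : (T : Set (MvPolynomial (Fin (n + 1)) k)) =
      {a | (∃ d : ℤ, a ∈ MvPolynomial.weightedHomogeneousSubmodule k w d) ∧ a ∉ p}) :
    LocStandard (MvPolynomial.weightedHomogeneousSubmodule k w) T ↔
      Ideal.span {m : ℤ | ∃ i, MvPolynomial.X i ∉ p ∧ m = w i} = ⊤ := by
  have hmemT : ∀ a : MvPolynomial (Fin (n + 1)) k,
      a ∈ T ↔ (∃ d : ℤ, a.IsWeightedHomogeneous w d) ∧ a ∉ p := by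
    intro a
    rw [← SetLike.mem_coe, hT]
    simp only [Set.mem_setOf_eq, mem_weightedHomogeneousSubmodule]
  constructor
  · rintro ⟨x, ⟨a, s, e, hae, hse, rfl⟩, hx⟩
    rw [mem_weightedHomogeneousSubmodule] at hae hse
    obtain ⟨-, hsp⟩ := (hmemT _).mp s.2
    obtain ⟨y, hy⟩ := hx.exists_right_inv
    obtain ⟨⟨b, u⟩, rfl⟩ : ∃ z : _ × T, Localization.mk z.1 z.2 = y := by
      induction y using Localization.ind with | _ z => exact ⟨z, rfl⟩
    rw [Localization.mk_mul, ← Localization.mk_one, Localization.mk_eq_mk_iff,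
      Localization.r_iff_exists] at hy
    obtain ⟨c, hc⟩ := hy
    dsimp only at hc
    simp only [OneMemClass.coe_one, one_mul, mul_one, Submonoid.coe_mul] at hc
    have hTmem : a * (b * (c : MvPolynomial (Fin (n + 1)) k)) ∈ T := by
      have h2 : a * (b * (c : MvPolynomial (Fin (n + 1)) k)) =
          ((c * (s * u) : T) : MvPolynomial (Fin (n + 1)) k) := by
        push_cast
        linear_combination hc
      rw [h2]
      exact SetLike.coe_mem _
    have hap : a ∉ p := fun h =>
      ((hmemT _).mp hTmem).2 (Ideal.mul_mem_right _ _ h)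
    have h1e := stmt17_deg_mem w p hap hae
    have he := stmt17_deg_mem w p hsp hse
    rw [Ideal.eq_top_iff_one]
    simpa using Ideal.sub_mem _ h1e he
  · intro hspan
    obtain ⟨a, s, hap, hsp, e, hae, hse⟩ := stmt17_achieve w p hp (d := 1)
      (by rw [hspan]; trivial)
    have haT : a ∈ T := (hmemT a).mpr ⟨⟨1 + e, hae⟩, hap⟩
    have hsT : s ∈ T := (hmemT s).mpr ⟨⟨e, hse⟩, hsp⟩
    refine ⟨Localization.mk a ⟨s, hsT⟩, ⟨a, ⟨s, hsT⟩, e,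
      (mem_weightedHomogeneousSubmodule k w _ a).mpr hae,
      (mem_weightedHomogeneousSubmodule k w _ s).mpr hse, rfl⟩, ?_⟩
    refine isUnit_iff_exists_inv.mpr ⟨Localization.mk s ⟨a, haT⟩, ?_⟩
    rw [Localization.mk_mul]
    rw [mul_comm a s]
    exact Localization.mk_self (⟨s * a, T.mul_mem hsT haT⟩ : T)


open MvPolynomial in
private lemma stmt17_prime (k : Type*) [CommRing k] [Nontrivial k] {n : ℕ}
    (w : Fin (n + 1) → ℤ) (i : Fin (n + 1)) :
    ∃ p : Ideal (MvPolynomial (Fin (n + 1)) k), p.IsPrime ∧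
      p.IsHomogeneous (MvPolynomial.weightedHomogeneousSubmodule k w) ∧
      MvPolynomial.X i ∉ p ∧ ∀ j, j ≠ i → MvPolynomial.X j ∈ p := by
  obtain ⟨q, hq⟩ := Ideal.exists_maximal k
  haveI := hq.isPrime
  let φ : MvPolynomial (Fin (n + 1)) k →+* Polynomial (k ⧸ q) :=
    (MvPolynomial.eval₂Hom ((Polynomial.C : (k ⧸ q) →+* Polynomial (k ⧸ q)).comp
      (Ideal.Quotient.mk q)) (fun j => if j = i then Polynomial.X else 0))
  have hφX : ∀ j, φ (MvPolynomial.X j) = if j = i then Polynomial.X else 0 :=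
    fun j => MvPolynomial.eval₂Hom_X' _ _ j
  have hcoeff : ∀ f t, (φ f).coeff t =
      Ideal.Quotient.mk q (MvPolynomial.coeff (Finsupp.single i t) f) := by
    intro f
    induction f using MvPolynomial.induction_on' with
    | add f g hf hg => intro t; simp [map_add, hf, hg]
    | monomial m c =>
      intro t
      rw [show φ ((monomial m) c) = Polynomial.C (Ideal.Quotient.mk q c) *
          m.prod (fun j e => (if j = i then (Polynomial.X : Polynomial (k ⧸ q)) else 0) ^ e) from
        MvPolynomial.eval₂_monomial _ _]
      by_cases hm : m.support ⊆ {i}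
      · rw [Finsupp.support_subset_singleton] at hm
        rw [hm, Finsupp.prod_single_index (by rw [pow_zero]), if_pos rfl,
          Polynomial.coeff_C_mul, Polynomial.coeff_X_pow, MvPolynomial.coeff_monomial]
        rcases eq_or_ne t (m i) with h | h
        · rw [if_pos h, if_pos (by rw [h]), mul_one]
        · rw [if_neg h, if_neg (fun hc => h (Finsupp.single_injective i hc).symm),
            mul_zero, map_zero]
      · obtain ⟨j, hjs, hji⟩ := Finset.not_subset.mp hm
        rw [Finset.mem_singleton] at hji
        have hprod : (m.prod fun j e =>
            (if j = i then (Polynomial.X : Polynomial (k ⧸ q)) else 0) ^ e) = 0 :=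
          Finset.prod_eq_zero hjs (by
            show (if j = i then (Polynomial.X : Polynomial (k ⧸ q)) else 0) ^ m j = 0
            rw [if_neg hji, zero_pow (Finsupp.mem_support_iff.mp hjs)])
        have hne : m ≠ Finsupp.single i t := by
          intro hc
          apply Finsupp.mem_support_iff.mp hjs
          rw [hc, Finsupp.single_apply, if_neg (Ne.symm hji)]
        rw [hprod, mul_zero, Polynomial.coeff_zero, MvPolynomial.coeff_monomial,
          if_neg hne, map_zero]
  have hker : ∀ f, f ∈ RingHom.ker φ ↔
      ∀ t, MvPolynomial.coeff (Finsupp.single i t) f ∈ q := by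
    intro f
    rw [RingHom.mem_ker, Polynomial.ext_iff]
    simp only [hcoeff, Polynomial.coeff_zero]
    exact forall_congr' fun t => Ideal.Quotient.eq_zero_iff_mem
  refine ⟨RingHom.ker φ, RingHom.ker_isPrime φ, ?_, ?_, ?_⟩
  · intro d f hf
    have hdec : (DirectSum.decompose (weightedHomogeneousSubmodule k w) f d :
        MvPolynomial (Fin (n + 1)) k) = weightedHomogeneousComponent w d f :=
      MvPolynomial.decompose'_apply k w f d
    rw [hker] at hf ⊢
    intro t
    rw [hdec, coeff_weightedHomogeneousComponent]
    split
    · exact hf t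
    · exact q.zero_mem
  · intro h
    rw [RingHom.mem_ker, hφX i, if_pos rfl] at h
    exact Polynomial.X_ne_zero h
  · intro j hji
    rw [RingHom.mem_ker, hφX j, if_neg hji]

/-- Let `P = k[x₀,…,xₙ]` be the weighted polynomial ring with
`deg xᵢ = wᵢ > 0` over a (nontrivial) commutative ring `k`, and `p` a homogeneous prime
not containing the irrelevant ideal.  Then the graded localization `P_p` is standard iff
`gcd{wᵢ : xᵢ ∉ p} = 1` (i.e. the ideal of `ℤ` generated by these weights is all of `ℤ`).
Consequently, `P_p` is standard for all such `p` iff `w₀ = ⋯ = wₙ = 1`. -/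
theorem stmt_17 {k : Type*} [CommRing k] [Nontrivial k] {n : ℕ}
    (w : Fin (n + 1) → ℤ) (hw : ∀ i, 0 < w i) :
    (∀ p : Ideal (MvPolynomial (Fin (n + 1)) k), p.IsPrime →
      p.IsHomogeneous (MvPolynomial.weightedHomogeneousSubmodule k w) →
      (∃ i, MvPolynomial.X i ∉ p) →
      ∀ T : Submonoid (MvPolynomial (Fin (n + 1)) k),
        (T : Set (MvPolynomial (Fin (n + 1)) k)) =
          {a | (∃ d : ℤ, a ∈ MvPolynomial.weightedHomogeneousSubmodule k w d) ∧ a ∉ p} →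
        (LocStandard (MvPolynomial.weightedHomogeneousSubmodule k w) T ↔
          Ideal.span {m : ℤ | ∃ i, MvPolynomial.X i ∉ p ∧ m = w i} = ⊤)) ∧
    ((∀ p : Ideal (MvPolynomial (Fin (n + 1)) k), p.IsPrime →
        p.IsHomogeneous (MvPolynomial.weightedHomogeneousSubmodule k w) →
        (∃ i, MvPolynomial.X i ∉ p) →
        ∀ T : Submonoid (MvPolynomial (Fin (n + 1)) k),
          (T : Set (MvPolynomial (Fin (n + 1)) k)) =
            {a | (∃ d : ℤ, a ∈ MvPolynomial.weightedHomogeneousSubmodule k w d) ∧ a ∉ p} →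
          LocStandard (MvPolynomial.weightedHomogeneousSubmodule k w) T)
      ↔ ∀ i, w i = 1) := by
  refine ⟨fun p hp _ _ T hT => stmt17_part1 w p hp T hT, ?_, ?_⟩
  · intro H i
    obtain ⟨p, hp, hhom, hXi, hXj⟩ := stmt17_prime k w i
    let T : Submonoid (MvPolynomial (Fin (n + 1)) k) :=
      { carrier := {a | (∃ d : ℤ, a ∈ MvPolynomial.weightedHomogeneousSubmodule k w d) ∧ a ∉ p}
        one_mem' := ⟨⟨0, (MvPolynomial.mem_weightedHomogeneousSubmodule k w 0 1).mpr
            (MvPolynomial.isWeightedHomogeneous_one k w)⟩,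
          (Ideal.ne_top_iff_one p).mp hp.ne_top⟩
        mul_mem' := by
          rintro a b ⟨⟨d1, h1⟩, h1'⟩ ⟨⟨d2, h2⟩, h2'⟩
          exact ⟨⟨d1 + d2, (MvPolynomial.mem_weightedHomogeneousSubmodule k w _ _).mpr
            (((MvPolynomial.mem_weightedHomogeneousSubmodule k w _ _).mp h1).mul
              ((MvPolynomial.mem_weightedHomogeneousSubmodule k w _ _).mp h2))⟩,
            fun h => ((hp.mem_or_mem h).elim h1' h2')⟩ }
    have hstd := H p hp hhom ⟨i, hXi⟩ T rfl
    have hspan := (stmt17_part1 w p hp T rfl).mp hstd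
    have hset : {m : ℤ | ∃ j, MvPolynomial.X j ∉ p ∧ m = w j} = {w i} := by
      ext m
      simp only [Set.mem_setOf_eq, Set.mem_singleton_iff]
      constructor
      · rintro ⟨j, hj, rfl⟩
        rcases eq_or_ne j i with rfl | hne
        · rfl
        · exact absurd (hXj j hne) hj
      · rintro rfl
        exact ⟨i, hXi, rfl⟩
    rw [hset, Ideal.span_singleton_eq_top] at hspan
    rcases Int.isUnit_iff.mp hspan with h | h
    · exact h
    · have := hw i; omega
  · intro h1 p hp _ hex T hT
    rw [stmt17_part1 w p hp T hT]
    obtain ⟨i, hXi⟩ := hex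
    rw [Ideal.eq_top_iff_one]
    exact Ideal.subset_span ⟨i, hXi, (h1 i).symm⟩
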